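/- The directed graph on the set of linear extensions L(P) of a finite poset P, with an edge from π to π' whenever π' = π ∂_j for some j ∈ [n], is strongly connected. -/

import Mathlib

open scoped Classical

/-- A partial order on `Fin n`, given as a plain structure (so that the standard
linear order on `Fin n` is unaffected). -/
structure FinPoset (n : ℕ) where
  le : Fin n → Fin n → Prop
  le_refl : ∀ a, le a a
  le_trans : ∀ a b c, le a b → le b c → le a c
  le_antisymm : ∀ a b, le a b → le b a → a = b

/-- The strict order associated to a `FinPoset`. -/
def FinPoset.lt {n : ℕ} (P : FinPoset n) (a b : Fin n) : Prop :=
  P.le a b ∧ a ≠ b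

variable {n : ℕ}

/-- `tauOp P i π` is the operator `τ_i` (0-indexed) acting on the permutation `π`
(in one-line notation `π k` is the entry at position `k`): it swaps the entries at
positions `i` and `i+1` if they are incomparable in `P`, else fixes `π`. -/
noncomputable def tauOp (P : FinPoset n) (i : ℕ) (π : Equiv.Perm (Fin n)) :
    Equiv.Perm (Fin n) :=
  if h : i + 1 < n then
    if ¬ P.le (π ⟨i, Nat.lt_of_succ_lt h⟩) (π ⟨i + 1, h⟩) ∧
        ¬ P.le (π ⟨i + 1, h⟩) (π ⟨i, Nat.lt_of_succ_lt h⟩) then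
      π * Equiv.swap ⟨i, Nat.lt_of_succ_lt h⟩ ⟨i + 1, h⟩
    else π
  else π

/-- `π` is a linear extension of the poset `P` on `Fin n`: if `a ≺ b` in `P`
then the position of `a` precedes the position of `b`. -/
def IsLinearExtension (P : FinPoset n) (π : Equiv.Perm (Fin n)) : Prop :=
  ∀ a b : Fin n, P.lt a b → π.symm a < π.symm b

/-- The extended promotion operator `∂_j = τ_j τ_{j+1} ⋯ τ_{n-2}` (0-indexed),
applied on the right to `π`. -/
noncomputable def promoOp (P : FinPoset n) (j : ℕ) (π : Equiv.Perm (Fin n)) :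
    Equiv.Perm (Fin n) :=
  (List.range (n - 1 - j)).foldl (fun σ k => tauOp P (j + k) σ) π


section Aux

lemma swap_adj_lt {x y u v : Fin n} (hxy : (y:ℕ) = (x:ℕ) + 1) (huv : u < v)
    (hne : ¬(u = x ∧ v = y)) : Equiv.swap x y u < Equiv.swap x y v := by
  simp only [Equiv.swap_apply_def]
  split_ifs <;> fin_omega

lemma perm_strictMono_eq_one (f : Equiv.Perm (Fin n)) (hf : StrictMono (f : Fin n → Fin n)) :
    f = 1 := by
  have key : ∀ (g : Equiv.Perm (Fin n)), StrictMono (g : Fin n → Fin n) →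
      ∀ i : Fin n, i ≤ g i := by
    intro g hg i
    have : ∀ k (i : Fin n), i.val = k → k ≤ (g i).val := by
      intro k
      induction k with
      | zero => intro i _; omega
      | succ k ih =>
        intro i hi
        have hk : k < n := by omega
        have h1 := ih ⟨k, hk⟩ rfl
        have h2 : g ⟨k, hk⟩ < g i := hg (by simp [Fin.lt_def]; omega)
        simp only [Fin.lt_def] at h2
        omega
    exact Fin.le_def.mpr (this i.val i rfl)
  have hsymm : StrictMono (f.symm : Fin n → Fin n) := by
    intro a b hab
    by_contra hcon
    push_neg at hcon
    have h2 := hf.le_iff_le.mpr hcon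
    simp only [Equiv.apply_symm_apply] at h2
    exact absurd hab (not_lt.mpr h2)
  ext i
  have h1 := key f hf i
  have h2 := key f.symm hsymm (f i)
  simp only [Equiv.symm_apply_apply] at h2
  have := le_antisymm h1 h2
  simp [← this]

lemma tau_LE (P : FinPoset n) (i : ℕ) (π : Equiv.Perm (Fin n))
    (hπ : IsLinearExtension P π) : IsLinearExtension P (tauOp P i π) := by
  unfold tauOp
  split_ifs with h hc
  · intro a b hab
    have huv := hπ a b hab
    simp only [Equiv.Perm.mul_def, Equiv.symm_trans_apply, Equiv.symm_swap]
    apply swap_adj_lt rfl huv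
    rintro ⟨h1, h2⟩
    apply hc.1
    rw [← h1, ← h2]
    simp only [Equiv.apply_symm_apply]
    exact hab.1
  · exact hπ
  · exact hπ

lemma tau_tau (P : FinPoset n) (i : ℕ) (π : Equiv.Perm (Fin n)) :
    tauOp P i (tauOp P i π) = π := by
  unfold tauOp
  split_ifs with h hc hc2 <;> try rfl
  · rw [mul_assoc, Equiv.swap_mul_self, mul_one]
  · exfalso
    apply hc2
    simp only [Equiv.Perm.mul_apply, Equiv.swap_apply_left, Equiv.swap_apply_right]
    exact ⟨hc.2, hc.1⟩

lemma tau_injective (P : FinPoset n) (i : ℕ) : Function.Injective (tauOp P i) :=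
  Function.LeftInverse.injective (g := tauOp P i) (tau_tau P i)

lemma foldl_tau_LE (P : FinPoset n) (g : ℕ → ℕ) (l : List ℕ) (π : Equiv.Perm (Fin n))
    (hπ : IsLinearExtension P π) :
    IsLinearExtension P (l.foldl (fun σ k => tauOp P (g k) σ) π) := by
  induction l generalizing π with
  | nil => exact hπ
  | cons a l ih => exact ih _ (tau_LE P (g a) π hπ)

lemma promo_LE (P : FinPoset n) (j : ℕ) (π : Equiv.Perm (Fin n))
    (hπ : IsLinearExtension P π) : IsLinearExtension P (promoOp P j π) :=
  foldl_tau_LE P (fun k => j + k) _ π hπ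

lemma promo_injective (P : FinPoset n) (j : ℕ) : Function.Injective (promoOp P j) := by
  unfold promoOp
  generalize List.range (n - 1 - j) = l
  induction l with
  | nil => exact fun a b h => h
  | cons a l ih =>
    intro σ σ' hh
    simp only [List.foldl_cons] at hh
    exact tau_injective P (j + a) (ih hh)

end Aux

section Conn

variable (P : FinPoset n)

/-- The edge relation. -/
def Edge (σ σ' : Equiv.Perm (Fin n)) : Prop :=
  IsLinearExtension P σ ∧ ∃ j, j < n ∧ σ' = promoOp P j σ

lemma conn_iter (j : ℕ) (hj : j < n) (σ : Equiv.Perm (Fin n))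
    (hσ : IsLinearExtension P σ) (k : ℕ) :
    Relation.ReflTransGen (Edge P) σ ((promoOp P j)^[k] σ) := by
  induction k with
  | zero => exact Relation.ReflTransGen.refl
  | succ k ih =>
    have hLE : IsLinearExtension P ((promoOp P j)^[k] σ) := by
      clear ih
      induction k with
      | zero => exact hσ
      | succ k ih2 => rw [Function.iterate_succ_apply']; exact promo_LE P j _ ih2
    rw [Function.iterate_succ_apply']
    exact ih.tail ⟨hLE, j, hj, rfl⟩

lemma conn_back (j : ℕ) (hj : j < n) (σ : Equiv.Perm (Fin n))
    (hσ : IsLinearExtension P σ) :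
    Relation.ReflTransGen (Edge P) (promoOp P j σ) σ := by
  have hbij : Function.Bijective (promoOp P j) :=
    Finite.injective_iff_bijective.mp (promo_injective P j)
  set e : Equiv.Perm (Equiv.Perm (Fin n)) := Equiv.ofBijective _ hbij with he
  have hiter : ∀ (k : ℕ) (x : Equiv.Perm (Fin n)), (promoOp P j)^[k] x = (e ^ k) x := by
    intro k
    induction k with
    | zero => intro x; rfl
    | succ k ih =>
      intro x
      rw [Function.iterate_succ_apply', ih, pow_succ', Equiv.Perm.mul_apply]
      rfl
  have hm : 0 < orderOf e := orderOf_pos e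
  have hfix : (promoOp P j)^[orderOf e] σ = σ := by
    rw [hiter, pow_orderOf_eq_one]; rfl
  obtain ⟨m, hm'⟩ : ∃ m, orderOf e = m + 1 := ⟨orderOf e - 1, by omega⟩
  have hkey : (promoOp P j)^[m] (promoOp P j σ) = σ := by
    rw [← Function.iterate_succ_apply, Nat.succ_eq_add_one, ← hm', hfix]
  have h := conn_iter P j hj (promoOp P j σ) (promo_LE P j σ hσ) m
  rwa [hkey] at h

lemma promo_decomp (j : ℕ) (hj : j + 1 < n) (π : Equiv.Perm (Fin n)) :
    promoOp P j π = promoOp P (j + 1) (tauOp P j π) := by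
  unfold promoOp
  obtain ⟨m, hm⟩ : ∃ m, n - 1 - j = m + 1 := ⟨n - 2 - j, by omega⟩
  have hm2 : n - 1 - (j + 1) = m := by omega
  rw [hm, hm2, List.range_succ_eq_map, List.foldl_cons, List.foldl_map]
  simp only [Nat.add_zero]
  congr 1
  funext σ k
  congr 1
  omega

lemma conn_tau (j : ℕ) (hj : j + 1 < n) (π : Equiv.Perm (Fin n))
    (hπ : IsLinearExtension P π) :
    Relation.ReflTransGen (Edge P) π (tauOp P j π) := by
  have hτ : IsLinearExtension P (tauOp P j π) := tau_LE P j π hπ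
  have h1 : Relation.ReflTransGen (Edge P) π (promoOp P j π) :=
    Relation.ReflTransGen.single ⟨hπ, j, by omega, rfl⟩
  have h2 : promoOp P j π = promoOp P (j + 1) (tauOp P j π) := promo_decomp P j hj π
  have h3 : Relation.ReflTransGen (Edge P) (promoOp P (j + 1) (tauOp P j π)) (tauOp P j π) :=
    conn_back P (j + 1) hj (tauOp P j π) hτ
  exact h1.trans (h2 ▸ h3)

end Conn

section Inv

/-- Inversion set of a map. -/
noncomputable def InvSet (f : Fin n → Fin n) : Finset (Fin n × Fin n) :=
  Finset.univ.filter (fun p => p.1 < p.2 ∧ f p.2 < f p.1)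

lemma invSet_card_lt (f : Fin n → Fin n) (x y : Fin n) (hxy : (y:ℕ) = (x:ℕ) + 1)
    (hd : f y < f x) :
    (InvSet (f ∘ (Equiv.swap x y))).card < (InvSet f).card := by
  have hxmem : (x, y) ∈ InvSet f := by
    simp only [InvSet, Finset.mem_filter, Finset.mem_univ, true_and]
    exact ⟨by fin_omega, hd⟩
  have hle : (InvSet (f ∘ (Equiv.swap x y))).card ≤ ((InvSet f).erase (x, y)).card := by
    apply Finset.card_le_card_of_injOn (fun p => (Equiv.swap x y p.1, Equiv.swap x y p.2))
    · intro p hp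
      simp only [Finset.mem_coe, InvSet, Finset.mem_filter, Finset.mem_univ, true_and, Function.comp_apply] at hp
      have hne : ¬(p.1 = x ∧ p.2 = y) := by
        rintro ⟨h1, h2⟩
        rw [h1, h2] at hp
        simp only [Equiv.swap_apply_left, Equiv.swap_apply_right] at hp
        exact absurd hp.2 (not_lt.mpr (le_of_lt hd))
      have hlt : Equiv.swap x y p.1 < Equiv.swap x y p.2 := swap_adj_lt hxy hp.1 hne
      rw [Finset.mem_coe, Finset.mem_erase]
      constructor
      · intro hcon
        have h1 : Equiv.swap x y p.1 = x := congrArg Prod.fst hcon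
        have h2 : Equiv.swap x y p.2 = y := congrArg Prod.snd hcon
        have : p.1 = y := by
          have := congrArg (Equiv.swap x y) h1
          simpa [Equiv.swap_apply_left] using this
        have : p.2 = x := by
          have := congrArg (Equiv.swap x y) h2
          simpa [Equiv.swap_apply_right] using this
        fin_omega
      · simp only [InvSet, Finset.mem_filter, Finset.mem_univ, true_and]
        exact ⟨hlt, hp.2⟩
    · intro p _ q _ hpq
      have h1 := congrArg Prod.fst hpq
      have h2 := congrArg Prod.snd hpq
      simp only at h1 h2
      exact Prod.ext ((Equiv.swap x y).injective h1) ((Equiv.swap x y).injective h2)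
  calc (InvSet (f ∘ (Equiv.swap x y))).card ≤ ((InvSet f).erase (x, y)).card := hle
    _ < (InvSet f).card := Finset.card_erase_lt_of_mem hxmem

end Inv

lemma strictMono_of_no_descent (f : Equiv.Perm (Fin n))
    (h : ∀ i (hi : i + 1 < n), ¬ f ⟨i + 1, hi⟩ < f ⟨i, Nat.lt_of_succ_lt hi⟩) :
    StrictMono (f : Fin n → Fin n) := by
  have adj : ∀ (a b : Fin n), (b:ℕ) = (a:ℕ) + 1 → f a < f b := by
    intro a b hab
    have hi : (a:ℕ) + 1 < n := by omega
    have hb : b = ⟨(a:ℕ) + 1, hi⟩ := Fin.ext (by simpa using hab)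
    have ha : a = ⟨(a:ℕ), Nat.lt_of_succ_lt hi⟩ := Fin.ext rfl
    have hnd := h (a:ℕ) hi
    rw [← hb, ← ha] at hnd
    have hne : f a ≠ f b := fun hc => by
      have : a = b := f.injective hc
      fin_omega
    rcases lt_trichotomy (f a) (f b) with h1 | h1 | h1
    · exact h1
    · exact absurd h1 hne
    · exact absurd h1 hnd
  have key : ∀ d (a b : Fin n), (b:ℕ) = (a:ℕ) + d + 1 → f a < f b := by
    intro d
    induction d with
    | zero => intro a b hab; exact adj a b (by omega)
    | succ d ih =>
      intro a b hab
      have hc : (a:ℕ) + d + 1 < n := by omega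
      exact lt_trans (ih a ⟨(a:ℕ) + d + 1, hc⟩ (by simp)) (adj _ b (by simp; omega))
  intro a b hab
  exact key ((b:ℕ) - (a:ℕ) - 1) a b (by fin_omega)

theorem promotion_graph_strongly_connected (P : FinPoset n)
    (π π' : Equiv.Perm (Fin n)) (hπ : IsLinearExtension P π)
    (hπ' : IsLinearExtension P π') :
    Relation.ReflTransGen
      (fun σ σ' => IsLinearExtension P σ ∧ ∃ j, j < n ∧ σ' = promoOp P j σ) π π' := by
  show Relation.ReflTransGen (Edge P) π π'
  suffices H : ∀ N (σ : Equiv.Perm (Fin n)), IsLinearExtension P σ →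
      (InvSet ((π'.symm * σ : Equiv.Perm (Fin n)) : Fin n → Fin n)).card ≤ N →
      Relation.ReflTransGen (Edge P) σ π' from H _ π hπ le_rfl
  intro N
  induction N with
  | zero =>
    intro σ hLE hcard
    have hmono : StrictMono ((π'.symm * σ : Equiv.Perm (Fin n)) : Fin n → Fin n) := by
      apply strictMono_of_no_descent
      intro i hi hd
      have : (⟨i, Nat.lt_of_succ_lt hi⟩, (⟨i + 1, hi⟩ : Fin n)) ∈
          InvSet ((π'.symm * σ : Equiv.Perm (Fin n)) : Fin n → Fin n) := by
        simp only [InvSet, Finset.mem_filter, Finset.mem_univ, true_and]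
        exact ⟨by simp [Fin.lt_def], hd⟩
      have := Finset.card_pos.mpr ⟨_, this⟩
      omega
    have : (π'.symm * σ : Equiv.Perm (Fin n)) = 1 := perm_strictMono_eq_one _ hmono
    have hσ : σ = π' := by
      have := congrArg (fun g => π' * g) this
      simpa [← mul_assoc, Equiv.Perm.mul_symm] using this
    rw [hσ]
  | succ N ih =>
    intro σ hLE hcard
    set f : Equiv.Perm (Fin n) := π'.symm * σ with hf
    by_cases hdesc : ∃ i, ∃ hi : i + 1 < n, f ⟨i + 1, hi⟩ < f ⟨i, Nat.lt_of_succ_lt hi⟩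
    · obtain ⟨i, hi, hd⟩ := hdesc
      set x : Fin n := ⟨i, Nat.lt_of_succ_lt hi⟩ with hx
      set y : Fin n := ⟨i + 1, hi⟩ with hy
      have hinc : ¬ P.le (σ x) (σ y) ∧ ¬ P.le (σ y) (σ x) := by
        constructor
        · intro hc
          have hne : σ x ≠ σ y := fun h => by
            have := σ.injective h; simp [hx, hy, Fin.ext_iff] at this
          have := hπ' (σ x) (σ y) ⟨hc, hne⟩
          simp only [hf, Equiv.Perm.mul_apply] at hd
          exact absurd this (not_lt.mpr (le_of_lt hd))
        · intro hc
          have hne : σ y ≠ σ x := fun h => by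
            have := σ.injective h; simp [hx, hy, Fin.ext_iff] at this
          have := hLE (σ y) (σ x) ⟨hc, hne⟩
          simp only [Equiv.symm_apply_apply] at this
          simp [hx, hy, Fin.lt_def] at this
      have htau : tauOp P i σ = σ * Equiv.swap x y := by
        unfold tauOp
        rw [dif_pos hi, if_pos hinc]
      have hcoe : ((π'.symm * (σ * Equiv.swap x y) : Equiv.Perm (Fin n)) : Fin n → Fin n)
          = (f : Fin n → Fin n) ∘ (Equiv.swap x y) := by
        funext u
        simp [hf, Equiv.Perm.mul_apply]
      have hlt := invSet_card_lt (f : Fin n → Fin n) x y rfl hd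
      have hconn1 : Relation.ReflTransGen (Edge P) σ (tauOp P i σ) :=
        conn_tau P i hi σ hLE
      have hconn2 : Relation.ReflTransGen (Edge P) (tauOp P i σ) π' := by
        rw [htau]
        apply ih _ (htau ▸ tau_LE P i σ hLE)
        rw [hcoe]
        omega
      exact hconn1.trans hconn2
    · push_neg at hdesc
      have hmono : StrictMono (f : Fin n → Fin n) :=
        strictMono_of_no_descent f (fun i hi => not_lt.mpr (hdesc i hi))
      have : f = 1 := perm_strictMono_eq_one _ hmono
      have hσ : σ = π' := by
        have := congrArg (fun g => π' * g) this
        simpa [hf, ← mul_assoc, Equiv.Perm.mul_symm] using this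
      rw [hσ]
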